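/- Let k > 0 and α ∈ ℝ² with |αₙ| ≠ k for all n ∈ ℤ², and let (Ẽₙ)_{n∈ℤ²} ⊂ ℂ³ be tangential vectors (e₃·Ẽₙ = 0) with Σₙ (1+|αₙ|²)^{−1/2}(|Ẽₙ|² + |αₙ·Ẽₙ|²) < ∞. Then the imaginary part of the pairing ⟨RẼ,Ẽ⟩ := 4π² Σ_{n∈ℤ²} R̂ₙ · conj(Ẽₙ), with R̂ₙ = −(1/(iβₙ))[k²Ẽₙ − (αₙ·Ẽₙ)αₙ], satisfies Im ⟨RẼ,Ẽ⟩ = 4π² Σ_{n∈P} (1/βₙ) [ k²|Ẽₙ|² − |αₙ·Ẽₙ|² ] ≥ 0, i.e. each term of this (finite) sum is nonnegative since |αₙ·Ẽₙ| ≤ |αₙ||Ẽₙ| < k|Ẽₙ| for n ∈ P. -/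

import Mathlib

open scoped Real

/-- `|αₙ|` for `αₙ = (α₁+n₁, α₂+n₂, 0)`. -/
noncomputable def alphaNorm (α : ℝ × ℝ) (n : ℤ × ℤ) : ℝ :=
  Real.sqrt ((α.1 + (n.1 : ℝ))^2 + (α.2 + (n.2 : ℝ))^2)

/-- The vector `αₙ = (α₁+n₁, α₂+n₂, 0)` viewed in `ℂ³`. -/
noncomputable def alphaVec (α : ℝ × ℝ) (n : ℤ × ℤ) : Fin 3 → ℂ :=
  ![((α.1 + (n.1 : ℝ) : ℝ) : ℂ), ((α.2 + (n.2 : ℝ) : ℝ) : ℂ), 0]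

/-- The vertical wavenumbers `βₙ` of the Rayleigh expansion:
`βₙ = (k² − |αₙ|²)^{1/2}` if `|αₙ| < k` and `βₙ = i(|αₙ|² − k²)^{1/2}` if `|αₙ| > k`. -/
noncomputable def betaN (k : ℝ) (α : ℝ × ℝ) (n : ℤ × ℤ) : ℂ :=
  if alphaNorm α n < k then (Real.sqrt (k^2 - (alphaNorm α n)^2) : ℂ)
  else Complex.I * (Real.sqrt ((alphaNorm α n)^2 - k^2) : ℂ)

/-- Bilinear dot product on `ℂ³` (no conjugation). -/
def cdot (a b : Fin 3 → ℂ) : ℂ := a 0 * b 0 + a 1 * b 1 + a 2 * b 2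

/-- Hermitian pairing `a · conj b` on `ℂ³`. -/
noncomputable def hpair (a b : Fin 3 → ℂ) : ℂ := ∑ j : Fin 3, a j * (starRingEnd ℂ) (b j)

/-- Squared Euclidean norm `|v|² = Σⱼ|vⱼ|²` of `v ∈ ℂ³`. -/
noncomputable def enormSq (v : Fin 3 → ℂ) : ℝ := ∑ j : Fin 3, ‖v j‖^2

/-- The Fourier symbol `R̂ₙ = −(1/(iβₙ))[k²Ẽₙ − (αₙ·Ẽₙ)αₙ]` of the transparent
boundary (Dirichlet-to-Neumann) operator `R`. -/
noncomputable def Rsymb (k : ℝ) (α : ℝ × ℝ) (n : ℤ × ℤ) (En : Fin 3 → ℂ) : Fin 3 → ℂ :=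
  fun j => -(1 / (Complex.I * betaN k α n)) *
    ((k : ℂ)^2 * En j - cdot (alphaVec α n) En * alphaVec α n j)

/-- The Sobolev weight `(1+|αₙ|²)^{−1/2}`. -/
noncomputable def sw (α : ℝ × ℝ) (n : ℤ × ℤ) : ℝ := 1 / Real.sqrt (1 + (alphaNorm α n)^2)

lemma mul_conj' (z : ℂ) : z * (starRingEnd ℂ) z = ((‖z‖ ^ 2 : ℝ) : ℂ) := by
  rw [Complex.mul_conj, ← Complex.sq_norm]

lemma hpair_formula (k : ℝ) (α : ℝ × ℝ) (n : ℤ × ℤ) (E : Fin 3 → ℂ) :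
    hpair (Rsymb k α n E) E = Complex.I / betaN k α n *
      (((k^2 * enormSq E - ‖cdot (alphaVec α n) E‖^2 : ℝ)) : ℂ) := by
  set a := alphaVec α n
  set c := cdot a E with hc
  set β := betaN k α n
  have hconj : a 0 * (starRingEnd ℂ) (E 0) + a 1 * (starRingEnd ℂ) (E 1)
      + a 2 * (starRingEnd ℂ) (E 2) = (starRingEnd ℂ) c := by
    simp [hc, cdot, a, alphaVec, map_add, map_mul, Complex.conj_ofReal]
  have key : hpair (Rsymb k α n E) E = -(1 / (Complex.I * β)) *
      ((k:ℂ)^2 * ((E 0 * (starRingEnd ℂ) (E 0)) + (E 1 * (starRingEnd ℂ) (E 1))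
        + (E 2 * (starRingEnd ℂ) (E 2)))
       - c * (a 0 * (starRingEnd ℂ) (E 0) + a 1 * (starRingEnd ℂ) (E 1)
        + a 2 * (starRingEnd ℂ) (E 2))) := by
    simp only [hpair, Rsymb, Fin.sum_univ_three]; ring
  rw [key, hconj, mul_conj', mul_conj', mul_conj', mul_conj']
  have hA : -(1 / (Complex.I * β)) = Complex.I / β := by
    rw [one_div, mul_inv, Complex.inv_I]; ring
  rw [hA, enormSq, Fin.sum_univ_three]
  push_cast
  ring

lemma alphaNorm_nonneg (α : ℝ × ℝ) (n : ℤ × ℤ) : 0 ≤ alphaNorm α n := Real.sqrt_nonneg _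

lemma alphaNorm_sq (α : ℝ × ℝ) (n : ℤ × ℤ) :
    (alphaNorm α n)^2 = (α.1 + (n.1 : ℝ))^2 + (α.2 + (n.2 : ℝ))^2 := by
  rw [alphaNorm, Real.sq_sqrt] ; positivity

lemma cdot_sq_le (α : ℝ × ℝ) (n : ℤ × ℤ) (E : Fin 3 → ℂ) :
    ‖cdot (alphaVec α n) E‖^2 ≤ (alphaNorm α n)^2 * enormSq E := by
  set x0 := α.1 + (n.1 : ℝ) with hx0; set x1 := α.2 + (n.2 : ℝ) with hx1
  have hcd : cdot (alphaVec α n) E = (x0:ℂ) * E 0 + (x1:ℂ) * E 1 := by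
    rw [hx0, hx1]
    simp [cdot, alphaVec]
  have h1 : ‖cdot (alphaVec α n) E‖
      ≤ |x0| * ‖E 0‖ + |x1| * ‖E 1‖ := by
    rw [hcd]
    calc ‖(x0:ℂ) * E 0 + (x1:ℂ) * E 1‖
        ≤ ‖(x0:ℂ) * E 0‖ + ‖(x1:ℂ) * E 1‖ := norm_add_le _ _
      _ = |x0| * ‖E 0‖ + |x1| * ‖E 1‖ := by
          simp [map_mul, Complex.norm_real]
  have hs := alphaNorm_sq α n
  have hb0 : (0:ℝ) ≤ ‖E 0‖ := norm_nonneg _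
  have hb1 : (0:ℝ) ≤ ‖E 1‖ := norm_nonneg _
  have hb2 : (0:ℝ) ≤ ‖E 2‖^2 := sq_nonneg _
  have hcn : (0:ℝ) ≤ ‖cdot (alphaVec α n) E‖ := norm_nonneg _
  have h2 := mul_self_le_mul_self hcn h1
  have hE : enormSq E = ‖E 0‖^2 + ‖E 1‖^2 + ‖E 2‖^2 := by
    rw [enormSq, Fin.sum_univ_three]
  have h3 : (0:ℝ) ≤ (x0^2 + x1^2) * ‖E 2‖^2 := by positivity
  have h4 : (|x0| * ‖E 0‖ + |x1| * ‖E 1‖)^2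
      ≤ (x0^2 + x1^2) * (‖E 0‖^2 + ‖E 1‖^2) := by
    nlinarith [sq_nonneg (|x0| * ‖E 1‖ - |x1| * ‖E 0‖),
      sq_abs x0, sq_abs x1]
  rw [hE, hs]
  have hx : (α.1 + (n.1:ℝ))^2 + (α.2 + (n.2:ℝ))^2 = x0^2 + x1^2 := rfl
  rw [hx]
  nlinarith [h2, h4, h3]

lemma im_term_lt {k : ℝ} {α : ℝ × ℝ} {n : ℤ × ℤ} (h : alphaNorm α n < k) (r : ℝ) :
    (Complex.I / betaN k α n * (r : ℂ)).im = 1 / Real.sqrt (k^2 - (alphaNorm α n)^2) * r := by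
  rw [betaN, if_pos h]
  simp [Complex.div_im, Complex.mul_im, Complex.mul_re, Complex.normSq]

lemma im_term_gt {k : ℝ} {α : ℝ × ℝ} {n : ℤ × ℤ} (h : ¬ alphaNorm α n < k) (r : ℝ) :
    (Complex.I / betaN k α n * (r : ℂ)).im = 0 := by
  rw [betaN, if_neg h]
  rw [div_mul_cancel_left₀ Complex.I_ne_zero]
  simp

lemma finite_lt (α : ℝ × ℝ) (c : ℝ) : {n : ℤ × ℤ | alphaNorm α n < c}.Finite := by
  apply Set.Finite.subset (Set.finite_Icc (⌈-α.1 - c⌉, ⌈-α.2 - c⌉) (⌊-α.1 + c⌋, ⌊-α.2 + c⌋))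
  intro n hn
  simp only [Set.mem_setOf_eq] at hn
  have h1 : |α.1 + (n.1 : ℝ)| ≤ alphaNorm α n := by
    rw [alphaNorm, ← Real.sqrt_sq_eq_abs]
    exact Real.sqrt_le_sqrt (by nlinarith [sq_nonneg (α.2 + (n.2:ℝ))])
  have h2 : |α.2 + (n.2 : ℝ)| ≤ alphaNorm α n := by
    rw [alphaNorm, ← Real.sqrt_sq_eq_abs]
    exact Real.sqrt_le_sqrt (by nlinarith [sq_nonneg (α.1 + (n.1:ℝ))])
  rw [abs_le] at h1 h2
  rw [Set.mem_Icc, Prod.mk_le_mk, Prod.mk_le_mk]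
  exact ⟨⟨Int.ceil_le.2 (by linarith [h1.1]), Int.ceil_le.2 (by linarith [h2.1])⟩,
    ⟨Int.le_floor.2 (by linarith [h1.2]), Int.le_floor.2 (by linarith [h2.2])⟩⟩

lemma enormSq_nonneg (v : Fin 3 → ℂ) : 0 ≤ enormSq v :=
  Finset.sum_nonneg fun _ _ => sq_nonneg _

lemma summable_hpair (k : ℝ) (hk : 0 < k) (α : ℝ × ℝ)
    (Et : ℤ × ℤ → Fin 3 → ℂ)
    (hsum : Summable fun n : ℤ × ℤ =>
      sw α n * (enormSq (Et n) + ‖cdot (alphaVec α n) (Et n)‖^2)) :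
    Summable fun n : ℤ × ℤ => hpair (Rsymb k α n (Et n)) (Et n) := by
  set C₀ : ℝ := Real.sqrt ((k^2 + 2*k + 2) / (2*k + 1)) with hC0
  set K : ℝ := max (k^2) 1 with hK
  have hC0n : 0 ≤ C₀ := Real.sqrt_nonneg _
  have hKn : 0 ≤ K := le_trans zero_le_one (le_max_right _ _)
  apply Summable.of_norm_bounded_eventually
    (g := fun n => (K * C₀) * (sw α n * (enormSq (Et n) + ‖cdot (alphaVec α n) (Et n)‖^2)))
    (hsum.mul_left (K * C₀))
  rw [Filter.eventually_cofinite]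
  apply Set.Finite.subset (finite_lt α (k + 1))
  intro n hn
  simp only [Set.mem_setOf_eq] at hn ⊢
  by_contra ht
  push_neg at ht
  apply hn
  -- ht : k + 1 ≤ alphaNorm α n
  set t := alphaNorm α n with htt
  set M := enormSq (Et n) + ‖cdot (alphaVec α n) (Et n)‖^2 with hM
  have htk : ¬ t < k := by linarith
  have hs0 : (0:ℝ) < t^2 - k^2 := by nlinarith
  set s := Real.sqrt (t^2 - k^2) with hss
  have hs : 0 < s := Real.sqrt_pos.2 hs0
  have hq : (0:ℝ) < Real.sqrt (1 + t^2) := Real.sqrt_pos.2 (by positivity)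
  have hnorm : ‖hpair (Rsymb k α n (Et n)) (Et n)‖
      = |k^2 * enormSq (Et n) - ‖cdot (alphaVec α n) (Et n)‖^2| / s := by
    rw [hpair_formula, betaN, if_neg htk]
    rw [norm_mul, norm_div, Complex.norm_I, norm_mul, Complex.norm_I,
      Complex.norm_real, Complex.norm_real, Real.norm_eq_abs, Real.norm_eq_abs,
      abs_of_nonneg (Real.sqrt_nonneg _)]
    rw [div_eq_mul_inv]; ring
  have hrK : |k^2 * enormSq (Et n) - ‖cdot (alphaVec α n) (Et n)‖^2| ≤ K * M := by
    have h1 : 0 ≤ enormSq (Et n) := enormSq_nonneg _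
    have h2 : 0 ≤ ‖cdot (alphaVec α n) (Et n)‖^2 := sq_nonneg _
    have hk2 : k^2 ≤ K := le_max_left _ _
    have h1K : 1 ≤ K := le_max_right _ _
    rw [abs_le]
    constructor <;> nlinarith [mul_le_mul_of_nonneg_right hk2 h1]
  have key : Real.sqrt (1 + t^2) ≤ C₀ * s := by
    rw [hC0, hss, ← Real.sqrt_mul (by positivity)]
    apply Real.sqrt_le_sqrt
    rw [div_mul_eq_mul_div, le_div_iff₀ (by linarith : (0:ℝ) < 2*k + 1)]
    nlinarith [sq_nonneg (t - (k+1)), mul_le_mul ht ht (by linarith) (by linarith)]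
  have hinv : 1 / s ≤ C₀ / Real.sqrt (1 + t^2) := by
    rw [div_le_div_iff₀ hs hq]
    linarith
  have hMn : 0 ≤ M := add_nonneg (enormSq_nonneg _) (sq_nonneg _)
  have hsw : sw α n = 1 / Real.sqrt (1 + t^2) := rfl
  calc ‖hpair (Rsymb k α n (Et n)) (Et n)‖
      = |k^2 * enormSq (Et n) - ‖cdot (alphaVec α n) (Et n)‖^2| * (1/s) := by
        rw [hnorm]; ring
    _ ≤ (K * M) * (C₀ / Real.sqrt (1 + t^2)) := by
        apply mul_le_mul hrK hinv (by positivity) (by positivity)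
    _ = K * C₀ * (sw α n * M) := by rw [hsw]; ring


/-- The imaginary part of the D-to-N pairing `⟨RẼ,Ẽ⟩ = 4π² Σₙ R̂ₙ·conj(Ẽₙ)` satisfies
`Im⟨RẼ,Ẽ⟩ = 4π² Σ_{n∈P} (1/βₙ)[k²|Ẽₙ|² − |αₙ·Ẽₙ|²] ≥ 0`, each term of this (finite)
sum over the propagating modes `P = {|αₙ| < k}` (where `βₙ = (k²−|αₙ|²)^{1/2} > 0`)
being nonnegative. -/
theorem im_pairing_formula_nonneg (k : ℝ) (hk : 0 < k) (α : ℝ × ℝ)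
    (hwood : ∀ n : ℤ × ℤ, alphaNorm α n ≠ k)
    (Et : ℤ × ℤ → Fin 3 → ℂ) (htan : ∀ n, Et n 2 = 0)
    (hsum : Summable fun n : ℤ × ℤ =>
      sw α n * (enormSq (Et n) + ‖cdot (alphaVec α n) (Et n)‖^2)) :
    (((4 * (π : ℂ)^2) * ∑' n : ℤ × ℤ, hpair (Rsymb k α n (Et n)) (Et n)).im
      = 4 * π^2 * ∑' n : {n : ℤ × ℤ // alphaNorm α n < k},
          (1 / Real.sqrt (k^2 - (alphaNorm α n.1)^2)) *
            (k^2 * enormSq (Et n.1) - ‖cdot (alphaVec α n.1) (Et n.1)‖^2)) ∧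
    (0 ≤ ((4 * (π : ℂ)^2) * ∑' n : ℤ × ℤ, hpair (Rsymb k α n (Et n)) (Et n)).im) ∧
    (∀ n : ℤ × ℤ, alphaNorm α n < k →
      0 ≤ (1 / Real.sqrt (k^2 - (alphaNorm α n)^2)) *
            (k^2 * enormSq (Et n) - ‖cdot (alphaVec α n) (Et n)‖^2)) := by
  set f : ℤ × ℤ → ℝ := fun n => (1 / Real.sqrt (k^2 - (alphaNorm α n)^2)) *
      (k^2 * enormSq (Et n) - ‖cdot (alphaVec α n) (Et n)‖^2) with hf
  have hpart3 : ∀ n : ℤ × ℤ, alphaNorm α n < k → 0 ≤ f n := by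
    intro n h
    have h1 := cdot_sq_le α n (Et n)
    have h2 := enormSq_nonneg (Et n)
    have h3 := alphaNorm_nonneg α n
    have ht2 : (alphaNorm α n)^2 ≤ k^2 := by nlinarith
    apply mul_nonneg (by positivity)
    nlinarith [mul_le_mul_of_nonneg_right ht2 h2]
  have hS : Summable fun n : ℤ × ℤ => hpair (Rsymb k α n (Et n)) (Et n) :=
    summable_hpair k hk α Et hsum
  have hterm : ∀ n : ℤ × ℤ, (hpair (Rsymb k α n (Et n)) (Et n)).im
      = Set.indicator {m : ℤ × ℤ | alphaNorm α m < k} f n := by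
    intro n
    rw [hpair_formula]
    by_cases h : alphaNorm α n < k
    · rw [Set.indicator_of_mem (show n ∈ {m : ℤ × ℤ | alphaNorm α m < k} from h) f,
        hf, im_term_lt h]
    · rw [Set.indicator_of_notMem (show n ∉ {m : ℤ × ℤ | alphaNorm α m < k} from h) f,
        im_term_gt h]
  have him : (∑' n : ℤ × ℤ, hpair (Rsymb k α n (Et n)) (Et n)).im
      = ∑' n : {n : ℤ × ℤ // alphaNorm α n < k}, f n.1 := by
    have h1 : (∑' n : ℤ × ℤ, hpair (Rsymb k α n (Et n)) (Et n)).im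
        = ∑' n : ℤ × ℤ, (hpair (Rsymb k α n (Et n)) (Et n)).im := by
      have := Complex.imCLM.map_tsum hS
      simpa using this
    rw [h1, tsum_congr hterm]
    exact (tsum_subtype {m : ℤ × ℤ | alphaNorm α m < k} f).symm
  have hc : (4 * (π : ℂ)^2) = ((4 * π^2 : ℝ) : ℂ) := by push_cast; ring
  have hmain : ((4 * (π : ℂ)^2) * ∑' n : ℤ × ℤ, hpair (Rsymb k α n (Et n)) (Et n)).im
      = 4 * π^2 * ∑' n : {n : ℤ × ℤ // alphaNorm α n < k}, f n.1 := by
    rw [hc, Complex.im_ofReal_mul, him]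
  refine ⟨hmain, ?_, hpart3⟩
  rw [hmain]
  apply mul_nonneg (by positivity)
  exact tsum_nonneg fun n => hpart3 n.1 n.2
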